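/- arXiv:2203.12158 — 2 statements merged into one kernel-verified Lean document; each statement's English description precedes it below -/
import Mathlib

section
/- Let G be a finite group acting on a finite set X, and let [H_1], …, [H_r] be the distinct conjugacy classes of point stabilizers. For each i set N_i = N_G(H_i), and let [K_{i,1}]_{N_i}, …, [K_{i,r_i}]_{N_i} be the distinct N_i-conjugacy classes of subgroups K that occur as point stabilizers and satisfy H_i < K. Fix, for each i, a point x_i with G_{x_i} = H_i; for each i and j ≤ r_i, a point y_{i,j} with G_{y_{i,j}} = K_{i,j}; and, for each i with at least two G-orbits of points with stabilizer conjugate to H_i, a point x_i' with G_{x_i'} = H_i and Gx_i ≠ Gx_i'. Then the set V = {[x_i ↦ y_{i,j}] : i ≤ r, j ≤ r_i} ∪ {[x_i ↦ x_i'] : i ≤ r with α_i ≥ 2} generates End_G(X) modulo Aut_G(X), where α_i is the number of G-orbits whose point stabilizer is conjugate to H_i. -/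
/-- The monoid of all `G`-equivariant transformations of `X`, as a submonoid of
`Function.End X` (composition of functions). -/
def gEnd (G X : Type*) [Group G] [MulAction G X] : Submonoid (Function.End X) where
  carrier := {f | ∀ (g : G) (x : X), f (g • x) = g • f x}
  one_mem' := fun _ _ => rfl
  mul_mem' := fun {f₁ f₂} h₁ h₂ g x => by
    show f₁ (f₂ (g • x)) = g • f₁ (f₂ x)
    rw [h₂, h₁]

/-- The group of all bijective `G`-equivariant transformations of `X`, as a subgroup of
`Equiv.Perm X`. -/
def gAut (G X : Type*) [Group G] [MulAction G X] : Subgroup (Equiv.Perm X) where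
  carrier := {f | ∀ (g : G) (x : X), f (g • x) = g • f x}
  one_mem' := fun _ _ => rfl
  mul_mem' := fun {f₁ f₂} h₁ h₂ g x => by
    show f₁ (f₂ (g • x)) = g • f₁ (f₂ x)
    rw [h₂, h₁]
  inv_mem' := fun {f} hf g x => f.injective (by
    rw [hf]; simp)

/-- The conjugate subgroup `g K g⁻¹`. -/
def conjSub {G : Type*} [Group G] (g : G) (K : Subgroup G) : Subgroup G :=
  Subgroup.map (MulAut.conj g).toMonoidHom K

/-- The `N`-conjugacy class `[K]_N = {gKg⁻¹ : g ∈ N}` of a subgroup `K`. -/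
def nConjClass {G : Type*} [Group G] (N K : Subgroup G) : Set (Subgroup G) :=
  {L | ∃ n ∈ N, L = conjSub n K}

/-- The set `O_[H]` of `G`-orbits of `X` whose point stabilizers are conjugate to `H`. -/
def classOrbits (G X : Type*) [Group G] [MulAction G X] (H : Subgroup G) : Set (Set X) :=
  {s | ∃ y : X, (∃ g : G, MulAction.stabilizer G y = conjSub g H) ∧ s = MulAction.orbit G y}

/-- The elements of `Aut_G(X)` viewed as a set of transformations of `X`. -/
def autSet (G X : Type*) [Group G] [MulAction G X] : Set (Function.End X) :=
  (fun e : Equiv.Perm X => (e : X → X)) '' (gAut G X)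

open Classical in
/-- The idempotent-like collapsing map `[x ↦ y]`: it sends `g • x` to `g • y`
and fixes every point outside the orbit of `x`.  (It is well defined as soon as
the stabilizer of `x` is contained in the stabilizer of `y`.) -/
noncomputable def collapse {G X : Type*} [Group G] [MulAction G X] (x y : X) : X → X :=
  fun z => if h : z ∈ MulAction.orbit G x then h.choose • y else z

def toEnd {X : Type*} (f : X → X) : Function.End X := f

section Helpers
open MulAction
variable {G X : Type*} [Group G] [MulAction G X]

lemma smul_mem_orbit_iff' {g : G} {z x : X} : g • z ∈ orbit G x ↔ z ∈ orbit G x := by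
  constructor
  · rintro ⟨g₀, h₀⟩
    have h₀' : g₀ • x = g • z := h₀
    exact ⟨g⁻¹ * g₀, show (g⁻¹ * g₀) • x = z by rw [mul_smul, h₀', inv_smul_smul]⟩
  · rintro ⟨g₀, h₀⟩
    have h₀' : g₀ • x = z := h₀
    exact ⟨g * g₀, show (g * g₀) • x = g • z by rw [mul_smul, h₀']⟩

lemma collapse_smul' {x y : X} (h : stabilizer G x ≤ stabilizer G y) (g : G) :
    collapse (G := G) x y (g • x) = g • y := by
  have hmem : g • x ∈ orbit G x := ⟨g, rfl⟩
  simp only [collapse]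
  rw [dif_pos hmem]
  have hs : hmem.choose • x = g • x := hmem.choose_spec
  have h1 : g⁻¹ * hmem.choose ∈ stabilizer G x := by
    rw [mem_stabilizer_iff, mul_smul, hs, inv_smul_smul]
  have h2 : (g⁻¹ * hmem.choose) • y = y := h h1
  calc hmem.choose • y = g • ((g⁻¹ * hmem.choose) • y) := by
        rw [mul_smul, smul_inv_smul]
    _ = g • y := by rw [h2]

lemma collapse_of_not_mem' {x y z : X} (hz : z ∉ orbit G x) :
    collapse (G := G) x y z = z := by
  simp only [collapse]
  rw [dif_neg hz]

lemma collapse_mem_gEnd' {x y : X} (h : stabilizer G x ≤ stabilizer G y) :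
    ∀ (g : G) (z : X), collapse (G := G) x y (g • z) = g • collapse (G := G) x y z := by
  intro g z
  by_cases hz : z ∈ orbit G x
  · obtain ⟨g₀, h₀⟩ := hz
    have h₀' : g₀ • x = z := h₀
    subst h₀'
    rw [← mul_smul, collapse_smul' h, collapse_smul' h, mul_smul]
  · rw [collapse_of_not_mem' hz, collapse_of_not_mem' (by rwa [smul_mem_orbit_iff'])]

end Helpers

section H2
open MulAction
variable {G X : Type*} [Group G] [MulAction G X]

lemma orbit_eq_of_mem' {z x : X} (h : z ∈ orbit G x) : orbit G z = orbit G x := by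
  obtain ⟨g, hg⟩ := h
  have hg' : g • x = z := hg
  rw [← hg', orbit_smul]

lemma orbit_ne_iff_not_mem {z x : X} : orbit G z ≠ orbit G x ↔ z ∉ orbit G x := by
  constructor
  · intro h hz; exact h (orbit_eq_of_mem' hz)
  · intro h he; exact h (he ▸ mem_orbit_self z)

open Classical in
noncomputable def swapFun (G : Type*) {X : Type*} [Group G] [MulAction G X] (u w : X) : X → X :=
  fun z => if h : z ∈ orbit G u then h.choose • w
    else if h' : z ∈ orbit G w then h'.choose • u else z

lemma swapFun_smul_left {u w : X} (h : stabilizer G u ≤ stabilizer G w) (g : G) :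
    swapFun G u w (g • u) = g • w := by
  have hmem : g • u ∈ orbit G u := ⟨g, rfl⟩
  simp only [swapFun]
  rw [dif_pos hmem]
  have hs : hmem.choose • u = g • u := hmem.choose_spec
  have h1 : g⁻¹ * hmem.choose ∈ stabilizer G u := by
    rw [mem_stabilizer_iff, mul_smul, hs, inv_smul_smul]
  have h2 : (g⁻¹ * hmem.choose) • w = w := h h1
  calc hmem.choose • w = g • ((g⁻¹ * hmem.choose) • w) := by rw [mul_smul, smul_inv_smul]
    _ = g • w := by rw [h2]

lemma swapFun_smul_right {u w : X} (h : stabilizer G w ≤ stabilizer G u)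
    (hne : orbit G u ≠ orbit G w) (g : G) :
    swapFun G u w (g • w) = g • u := by
  have hnm : g • w ∉ orbit G u := by
    intro hm
    exact (orbit_ne_iff_not_mem.mp hne.symm) (by rwa [smul_mem_orbit_iff'] at hm)
  have hmem : g • w ∈ orbit G w := ⟨g, rfl⟩
  simp only [swapFun]
  rw [dif_neg hnm, dif_pos hmem]
  have hs : hmem.choose • w = g • w := hmem.choose_spec
  have h1 : g⁻¹ * hmem.choose ∈ stabilizer G w := by
    rw [mem_stabilizer_iff, mul_smul, hs, inv_smul_smul]
  have h2 : (g⁻¹ * hmem.choose) • u = u := h h1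
  calc hmem.choose • u = g • ((g⁻¹ * hmem.choose) • u) := by rw [mul_smul, smul_inv_smul]
    _ = g • u := by rw [h2]

lemma swapFun_of_not_mem {u w z : X} (h1 : z ∉ orbit G u) (h2 : z ∉ orbit G w) :
    swapFun G u w z = z := by
  simp only [swapFun]
  rw [dif_neg h1, dif_neg h2]

lemma swapFun_involutive {u w : X} (hs : stabilizer G u = stabilizer G w)
    (hne : orbit G u ≠ orbit G w) : Function.Involutive (swapFun G u w) := by
  intro z
  by_cases h1 : z ∈ orbit G u
  · obtain ⟨g, hg⟩ := h1
    have hg' : g • u = z := hg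
    subst hg'
    rw [swapFun_smul_left hs.le, swapFun_smul_right hs.ge hne]
  · by_cases h2 : z ∈ orbit G w
    · obtain ⟨g, hg⟩ := h2
      have hg' : g • w = z := hg
      subst hg'
      rw [swapFun_smul_right hs.ge hne, swapFun_smul_left hs.le]
    · rw [swapFun_of_not_mem h1 h2, swapFun_of_not_mem h1 h2]

lemma swapFun_equivariant {u w : X} (hs : stabilizer G u = stabilizer G w)
    (hne : orbit G u ≠ orbit G w) (g : G) (z : X) :
    swapFun G u w (g • z) = g • swapFun G u w z := by
  by_cases h1 : z ∈ orbit G u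
  · obtain ⟨g₀, hg⟩ := h1
    have hg' : g₀ • u = z := hg
    subst hg'
    rw [← mul_smul, swapFun_smul_left hs.le, swapFun_smul_left hs.le, mul_smul]
  · by_cases h2 : z ∈ orbit G w
    · obtain ⟨g₀, hg⟩ := h2
      have hg' : g₀ • w = z := hg
      subst hg'
      rw [← mul_smul, swapFun_smul_right hs.ge hne, swapFun_smul_right hs.ge hne, mul_smul]
    · rw [swapFun_of_not_mem h1 h2,
        swapFun_of_not_mem (by rwa [smul_mem_orbit_iff']) (by rwa [smul_mem_orbit_iff'])]

noncomputable def swapPerm {u w : X} (hs : stabilizer G u = stabilizer G w)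
    (hne : orbit G u ≠ orbit G w) : Equiv.Perm X :=
  (swapFun_involutive hs hne).toPerm

lemma swapPerm_coe {u w : X} (hs : stabilizer G u = stabilizer G w)
    (hne : orbit G u ≠ orbit G w) : ⇑(swapPerm hs hne) = swapFun G u w := rfl

end H2

section H3
open MulAction
variable {G X : Type*} [Group G] [MulAction G X]

lemma gAut_equivariant {σ : Equiv.Perm X} (hσ : σ ∈ gAut G X) (g : G) (z : X) :
    σ (g • z) = g • σ z := hσ g z

lemma gAut_stab {σ : Equiv.Perm X} (hσ : σ ∈ gAut G X) (z : X) :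
    stabilizer G (σ z) = stabilizer G z := by
  ext g
  simp only [mem_stabilizer_iff]
  rw [← gAut_equivariant hσ]
  exact ⟨fun h => σ.injective h, fun h => by rw [h]⟩

lemma gAut_mem_orbit {σ : Equiv.Perm X} (hσ : σ ∈ gAut G X) {z a : X} :
    σ z ∈ orbit G (σ a) ↔ z ∈ orbit G a := by
  constructor
  · rintro ⟨g, hg⟩
    have hg' : g • σ a = σ z := hg
    rw [← gAut_equivariant hσ] at hg'
    exact ⟨g, σ.injective hg'⟩
  · rintro ⟨g, hg⟩
    have hg' : g • a = z := hg
    exact ⟨g, show g • σ a = σ z by rw [← gAut_equivariant hσ, hg']⟩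

lemma collapse_injective [Finite G] {u w : X} (hs : stabilizer G u = stabilizer G w)
    (hw : w ∈ orbit G u) : Function.Injective (collapse (G := G) u w) := by
  intro z z' he
  have how : orbit G w = orbit G u := orbit_eq_of_mem' hw
  by_cases h1 : z ∈ orbit G u
  · obtain ⟨g, hg⟩ := h1
    have hg' : g • u = z := hg
    subst hg'
    by_cases h2 : z' ∈ orbit G u
    · obtain ⟨g', hg2⟩ := h2
      have hg2' : g' • u = z' := hg2
      subst hg2'
      rw [collapse_smul' hs.le, collapse_smul' hs.le] at he
      have : (g'⁻¹ * g) • w = w := by rw [mul_smul, he, inv_smul_smul]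
      have hst : g'⁻¹ * g ∈ stabilizer G u := hs.ge (mem_stabilizer_iff.mpr this)
      have : (g'⁻¹ * g) • u = u := hst
      calc g • u = g' • ((g'⁻¹ * g) • u) := by rw [mul_smul, smul_inv_smul]
        _ = g' • u := by rw [this]
    · exfalso
      rw [collapse_smul' hs.le, collapse_of_not_mem' h2] at he
      apply h2
      rw [← he, ← how]
      exact ⟨g, rfl⟩
  · rw [collapse_of_not_mem' h1] at he
    by_cases h2 : z' ∈ orbit G u
    · exfalso
      obtain ⟨g', hg2⟩ := h2
      have hg2' : g' • u = z' := hg2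
      subst hg2'
      rw [collapse_smul' hs.le] at he
      apply h1
      rw [he, ← how]
      exact ⟨g', rfl⟩
    · rw [collapse_of_not_mem' h2] at he
      exact he

noncomputable def collapseOrbitPerm [Finite G] [Finite X] {u w : X}
    (hs : stabilizer G u = stabilizer G w) (hw : w ∈ orbit G u) : Equiv.Perm X :=
  Equiv.ofBijective (collapse (G := G) u w)
    ((Finite.injective_iff_bijective).mp (collapse_injective hs hw))

lemma collapseOrbitPerm_coe [Finite G] [Finite X] {u w : X}
    (hs : stabilizer G u = stabilizer G w) (hw : w ∈ orbit G u) :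
    ⇑(collapseOrbitPerm hs hw) = collapse (G := G) u w := rfl

lemma card_stab_smul (g : G) (z : X) :
    Nat.card (stabilizer G (g • z)) = Nat.card (stabilizer G z) := by
  rw [stabilizer_smul_eq_stabilizer_map_conj]
  exact (Nat.card_congr
    (Subgroup.equivMapOfInjective _ _ (MulAut.conj g).injective).toEquiv).symm

lemma card_stab_of_mem_orbit {u w : X} (h : w ∈ orbit G u) :
    Nat.card (stabilizer G w) = Nat.card (stabilizer G u) := by
  obtain ⟨g, hg⟩ := h
  have hg' : g • u = w := hg
  rw [← hg', card_stab_smul]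

lemma orbit_stab_card [Finite G] (v : X) :
    (orbit G v).ncard * Nat.card (stabilizer G v) = Nat.card G := by
  have h := Nat.card_congr (MulAction.orbitProdStabilizerEquivGroup G v)
  rw [Nat.card_prod] at h
  rw [← Nat.card_coe_set_eq]
  exact h

lemma orbit_ncard_le [Finite G] {v w : X}
    (h : Nat.card (stabilizer G v) ≤ Nat.card (stabilizer G w)) :
    (orbit G w).ncard ≤ (orbit G v).ncard := by
  have hv := orbit_stab_card (G := G) v
  have hw := orbit_stab_card (G := G) w
  have hpos : 0 < Nat.card (stabilizer G w) := Nat.card_pos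
  apply Nat.le_of_mul_le_mul_right _ hpos
  calc (orbit G w).ncard * Nat.card (stabilizer G w) = Nat.card G := hw
    _ = (orbit G v).ncard * Nat.card (stabilizer G v) := hv.symm
    _ ≤ (orbit G v).ncard * Nat.card (stabilizer G w) := Nat.mul_le_mul_left _ h

lemma stab_eq_of_le_of_card_le [Finite G] {K L : Subgroup G} (hle : K ≤ L)
    (hc : Nat.card L ≤ Nat.card K) : K = L :=
  Subgroup.eq_of_le_of_card_ge hle hc

lemma stab_eq_of_le_mem [Finite G] {a b : X} (hle : stabilizer G a ≤ stabilizer G b)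
    (hm : b ∈ orbit G a) : stabilizer G a = stabilizer G b :=
  Subgroup.eq_of_le_of_card_ge hle (card_stab_of_mem_orbit hm).le

end H3

section H4
open MulAction
variable {G X : Type*} [Group G] [MulAction G X]

lemma mem_conjSub {g x : G} {K : Subgroup G} :
    x ∈ conjSub g K ↔ g⁻¹ * x * g ∈ K := by
  rw [conjSub, Subgroup.mem_map_equiv, MulAut.conj_symm_apply]

lemma conjSub_one (K : Subgroup G) : conjSub (1 : G) K = K := by
  ext x; rw [mem_conjSub]; simp

lemma conjSub_conjSub (g n : G) (K : Subgroup G) :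
    conjSub g (conjSub n K) = conjSub (g * n) K := by
  ext x; rw [mem_conjSub, mem_conjSub, mem_conjSub]
  have he : n⁻¹ * (g⁻¹ * x * g) * n = (g * n)⁻¹ * x * (g * n) := by group
  rw [he]

lemma conjSub_le_conjSub (g : G) {K L : Subgroup G} (h : K ≤ L) :
    conjSub g K ≤ conjSub g L := by
  intro x hx; rw [mem_conjSub] at *; exact h hx

lemma conjSub_inj {g : G} {K L : Subgroup G} (h : conjSub g K = conjSub g L) : K = L := by
  have := congrArg (conjSub g⁻¹) h
  rwa [conjSub_conjSub, conjSub_conjSub, inv_mul_cancel, conjSub_one, conjSub_one] at this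

lemma conjSub_lt_conjSub (g : G) {K L : Subgroup G} (h : K < L) :
    conjSub g K < conjSub g L :=
  lt_of_le_of_ne (conjSub_le_conjSub g h.le) (fun he => h.ne (conjSub_inj he))

lemma conjSub_of_mem_normalizer {n : G} {K : Subgroup G} (hn : n ∈ Subgroup.normalizer (K : Set G)) :
    conjSub n K = K := by
  ext x
  rw [mem_conjSub]
  rw [Subgroup.mem_normalizer_iff] at hn
  exact (hn (n⁻¹ * x * n)).trans
    (by rw [show n * (n⁻¹ * x * n) * n⁻¹ = x by group])

lemma stab_smul_conj (g : G) (z : X) :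
    stabilizer G (g • z) = conjSub g (stabilizer G z) :=
  stabilizer_smul_eq_stabilizer_map_conj g z

lemma stab_le_gEnd {f : Function.End X} (hf : f ∈ gEnd G X) (z : X) :
    stabilizer G z ≤ stabilizer G (f z) := by
  intro g hg
  rw [mem_stabilizer_iff] at hg ⊢
  rw [← hf g z, hg]

lemma exists_gAut [Finite G] [Finite X] {a b p q : X}
    (hab : orbit G a ≠ orbit G b) (hpq : orbit G p ≠ orbit G q)
    (hap : stabilizer G a = stabilizer G p) (hbq : stabilizer G b = stabilizer G q) :
    ∃ σ : Equiv.Perm X, σ ∈ gAut G X ∧ σ a = p ∧ σ b = q := by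
  -- first permutation sending a to p
  have step1 : ∃ σ₁ : Equiv.Perm X, σ₁ ∈ gAut G X ∧ σ₁ a = p ∧
      (∀ z, z ∉ orbit G a → z ∉ orbit G p → σ₁ z = z) := by
    by_cases hop : orbit G a = orbit G p
    · have hp : p ∈ orbit G a := hop ▸ mem_orbit_self p
      refine ⟨collapseOrbitPerm hap hp, ?_, ?_, ?_⟩
      · exact fun g z => collapse_mem_gEnd' hap.le g z
      · show collapse (G := G) a p a = p
        have := collapse_smul' (G := G) hap.le (1 : G)
        rwa [one_smul, one_smul] at this
      · intro z hz _
        exact collapse_of_not_mem' hz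
    · refine ⟨swapPerm hap hop, ?_, ?_, ?_⟩
      · exact fun g z => swapFun_equivariant hap hop g z
      · show swapFun G a p a = p
        have := swapFun_smul_left (G := G) hap.le (1 : G)
        rwa [one_smul, one_smul] at this
      · intro z hz hz'
        exact swapFun_of_not_mem hz hz'
  obtain ⟨σ₁, hσ₁, hσ₁a, hσ₁fix⟩ := step1
  set b₁ := σ₁ b with hb₁
  have hb₁q : stabilizer G b₁ = stabilizer G q := (gAut_stab hσ₁ b).trans hbq
  have hpnb₁ : p ∉ orbit G b₁ := by
    intro hm
    rw [← hσ₁a] at hm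
    exact (orbit_ne_iff_not_mem.mp hab) ((gAut_mem_orbit hσ₁).mp hm)
  have hpnq : p ∉ orbit G q := orbit_ne_iff_not_mem.mp hpq
  have step2 : ∃ σ₂ : Equiv.Perm X, σ₂ ∈ gAut G X ∧ σ₂ b₁ = q ∧ σ₂ p = p := by
    by_cases hoq : orbit G b₁ = orbit G q
    · have hq : q ∈ orbit G b₁ := hoq ▸ mem_orbit_self q
      refine ⟨collapseOrbitPerm hb₁q hq, ?_, ?_, ?_⟩
      · exact fun g z => collapse_mem_gEnd' hb₁q.le g z
      · show collapse (G := G) b₁ q b₁ = q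
        have := collapse_smul' (G := G) hb₁q.le (1 : G)
        rwa [one_smul, one_smul] at this
      · exact collapse_of_not_mem' hpnb₁
    · refine ⟨swapPerm hb₁q hoq, ?_, ?_, ?_⟩
      · exact fun g z => swapFun_equivariant hb₁q hoq g z
      · show swapFun G b₁ q b₁ = q
        have := swapFun_smul_left (G := G) hb₁q.le (1 : G)
        rwa [one_smul, one_smul] at this
      · exact swapFun_of_not_mem hpnb₁ hpnq
  obtain ⟨σ₂, hσ₂, hσ₂b, hσ₂p⟩ := step2
  refine ⟨σ₂ * σ₁, mul_mem hσ₂ hσ₁, ?_, ?_⟩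
  · rw [Equiv.Perm.mul_apply, hσ₁a, hσ₂p]
  · rw [Equiv.Perm.mul_apply, ← hb₁, hσ₂b]

lemma collapse_conj {σ : Equiv.Perm X} (hσ : σ ∈ gAut G X) {a b x₀ y₀ : X} (g₁ : G)
    (ha : σ a = g₁ • x₀) (hb : σ b = g₁ • y₀)
    (hab : stabilizer G a ≤ stabilizer G b)
    (hxy : stabilizer G x₀ ≤ stabilizer G y₀) (z : X) :
    σ (collapse (G := G) a b z) = collapse (G := G) x₀ y₀ (σ z) := by
  by_cases hz : z ∈ orbit G a
  · obtain ⟨g₀, hg⟩ := hz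
    have hg' : g₀ • a = z := hg
    subst hg'
    have l1 : σ (collapse (G := G) a b (g₀ • a)) = (g₀ * g₁) • y₀ := by
      rw [collapse_smul' hab, gAut_equivariant hσ, hb, mul_smul]
    have l2 : collapse (G := G) x₀ y₀ (σ (g₀ • a)) = (g₀ * g₁) • y₀ := by
      rw [gAut_equivariant hσ, ha, ← mul_smul, collapse_smul' hxy]
    rw [l1, l2]
  · rw [collapse_of_not_mem' hz, collapse_of_not_mem']
    intro hm
    apply hz
    have hx₀ : g₁ • x₀ ∈ orbit G x₀ := ⟨g₁, rfl⟩
    have : σ z ∈ orbit G (σ a) := by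
      rw [ha, orbit_eq_of_mem' hx₀]
      exact hm
    exact (gAut_mem_orbit hσ).mp this

end H4

section H5
open MulAction
variable {G X : Type*} [Group G] [MulAction G X] [Finite G] [Finite X]

lemma collapse_mem_closure
    {r : ℕ} {H : Fin r → Subgroup G}
    (hH2 : ∀ x : X, ∃! i, ∃ g : G, stabilizer G x = conjSub g (H i))
    {J : Fin r → Type} {y : (i : Fin r) → J i → X}
    (hy1 : ∀ i j, H i < stabilizer G (y i j))
    (hy3 : ∀ (i : Fin r) (z : X), H i < stabilizer G z →
      ∃ j, nConjClass (Subgroup.normalizer (H i : Set G)) (stabilizer G z) =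
        nConjClass (Subgroup.normalizer (H i : Set G)) (stabilizer G (y i j)))
    {x : Fin r → X} (hx : ∀ i, stabilizer G (x i) = H i)
    {x' : Fin r → X}
    (hx' : ∀ i, 2 ≤ (classOrbits G X (H i)).ncard →
      stabilizer G (x' i) = H i ∧ orbit G (x' i) ≠ orbit G (x i))
    {a b : X} (hab : stabilizer G a ≤ stabilizer G b) :
    (collapse (G := G) a b : Function.End X) ∈ Submonoid.closure
      (({f : Function.End X | ∃ i j, f = collapse (G := G) (x i) (y i j)} ∪
        {f : Function.End X | ∃ i, 2 ≤ (classOrbits G X (H i)).ncard ∧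
          f = collapse (G := G) (x i) (x' i)}) ∪ autSet G X) := by
  show toEnd (collapse (G := G) a b) ∈ _
  by_cases hmem : b ∈ orbit G a
  · have hs := stab_eq_of_le_mem hab hmem
    apply Submonoid.subset_closure
    exact Or.inr ⟨collapseOrbitPerm hs hmem, fun g z => collapse_mem_gEnd' hs.le g z, rfl⟩
  · obtain ⟨i, ⟨g, hgi⟩, -⟩ := hH2 a
    have hxi := hx i
    have hone_a : orbit G a ≠ orbit G b := fun he => hmem (he ▸ mem_orbit_self b)
    by_cases heq : stabilizer G a = stabilizer G b
    · -- equal stabilizers, distinct orbits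
      have hbm : stabilizer G b = conjSub g (H i) := heq ▸ hgi
      have hcard : 2 ≤ (classOrbits G X (H i)).ncard := by
        have h1 : 1 < (classOrbits G X (H i)).ncard := by
          rw [Set.one_lt_ncard_iff (Set.toFinite _)]
          exact ⟨orbit G a, orbit G b, ⟨a, ⟨g, hgi⟩, rfl⟩, ⟨b, ⟨g, hbm⟩, rfl⟩, hone_a⟩
        exact h1
      obtain ⟨hx'i, hone_x⟩ := hx' i hcard
      have hap : stabilizer G a = stabilizer G (g • x i) := by
        rw [stab_smul_conj, hxi, hgi]
      have hbq : stabilizer G b = stabilizer G (g • x' i) := by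
        rw [stab_smul_conj, hx'i, ← heq, hgi]
      have hpq : orbit G (g • x i) ≠ orbit G (g • x' i) := by
        rw [orbit_smul, orbit_smul]
        exact fun he => hone_x he.symm
      obtain ⟨σ, hσ, hσa, hσb⟩ := exists_gAut hone_a hpq hap hbq
      have hxy : stabilizer G (x i) ≤ stabilizer G (x' i) := by rw [hxi, hx'i]
      have key := collapse_conj hσ g hσa hσb hab hxy
      have hrw : toEnd (collapse (G := G) a b) =
          toEnd ⇑σ⁻¹ * (toEnd (collapse (G := G) (x i) (x' i)) * toEnd ⇑σ) := by
        funext z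
        show collapse (G := G) a b z = σ⁻¹ (collapse (G := G) (x i) (x' i) (σ z))
        rw [← key z]
        exact (Equiv.symm_apply_apply σ _).symm
      rw [hrw]
      apply Submonoid.mul_mem
      · exact Submonoid.subset_closure (Or.inr ⟨σ⁻¹, inv_mem hσ, rfl⟩)
      · apply Submonoid.mul_mem
        · exact Submonoid.subset_closure (Or.inl (Or.inr ⟨i, hcard, rfl⟩))
        · exact Submonoid.subset_closure (Or.inr ⟨σ, hσ, rfl⟩)
    · -- strictly increasing stabilizer
      have hlt : stabilizer G a < stabilizer G b := lt_of_le_of_ne hab heq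
      have hHib : H i < stabilizer G (g⁻¹ • b) := by
        rw [stab_smul_conj]
        have h2 : H i = conjSub g⁻¹ (stabilizer G a) := by
          rw [hgi, conjSub_conjSub, inv_mul_cancel, conjSub_one]
        rw [h2]
        exact conjSub_lt_conjSub g⁻¹ hlt
      obtain ⟨j, hclass⟩ := hy3 i (g⁻¹ • b) hHib
      have hself : stabilizer G (g⁻¹ • b) ∈
          nConjClass (Subgroup.normalizer (H i : Set G)) (stabilizer G (g⁻¹ • b)) :=
        ⟨1, one_mem _, (conjSub_one _).symm⟩
      rw [hclass] at hself
      obtain ⟨n, hn, hb₀⟩ := hself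
      have hbq : stabilizer G b = stabilizer G ((g * n) • y i j) := by
        conv_lhs => rw [show b = g • (g⁻¹ • b) from (smul_inv_smul g b).symm]
        rw [stab_smul_conj, hb₀, conjSub_conjSub, ← stab_smul_conj]
      have hap : stabilizer G a = stabilizer G ((g * n) • x i) := by
        rw [stab_smul_conj, hxi, ← conjSub_conjSub, conjSub_of_mem_normalizer hn, hgi]
      have hxy : stabilizer G (x i) ≤ stabilizer G (y i j) := by
        rw [hxi]; exact (hy1 i j).le
      have hpq : orbit G ((g * n) • x i) ≠ orbit G ((g * n) • y i j) := by
        rw [orbit_smul, orbit_smul]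
        intro he
        have hmemxy : y i j ∈ orbit G (x i) := he ▸ mem_orbit_self (y i j)
        have h3 := stab_eq_of_le_mem hxy hmemxy
        rw [hxi] at h3
        exact (hy1 i j).ne h3
      obtain ⟨σ, hσ, hσa, hσb⟩ := exists_gAut hone_a hpq hap hbq
      have key := collapse_conj hσ (g * n) hσa hσb hab hxy
      have hrw : toEnd (collapse (G := G) a b) =
          toEnd ⇑σ⁻¹ * (toEnd (collapse (G := G) (x i) (y i j)) * toEnd ⇑σ) := by
        funext z
        show collapse (G := G) a b z = σ⁻¹ (collapse (G := G) (x i) (y i j) (σ z))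
        rw [← key z]
        exact (Equiv.symm_apply_apply σ _).symm
      rw [hrw]
      apply Submonoid.mul_mem
      · exact Submonoid.subset_closure (Or.inr ⟨σ⁻¹, inv_mem hσ, rfl⟩)
      · apply Submonoid.mul_mem
        · exact Submonoid.subset_closure (Or.inl (Or.inl ⟨i, j, rfl⟩))
        · exact Submonoid.subset_closure (Or.inr ⟨σ, hσ, rfl⟩)

end H5

section H6
open MulAction
variable {G X : Type*} [Group G] [MulAction G X] [Finite G] [Finite X]

open Classical in
noncomputable def fixOrbit (G : Type*) {X : Type*} [Group G] [MulAction G X]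
    (v : X) (f : Function.End X) : Function.End X :=
  fun z => if z ∈ orbit G v then z else f z

omit [Finite G] [Finite X] in
lemma fixOrbit_pos {v : X} {f : Function.End X} {z : X} (h : z ∈ orbit G v) :
    fixOrbit G v f z = z := by
  simp only [fixOrbit]
  rw [if_pos h]

omit [Finite G] [Finite X] in
lemma fixOrbit_neg {v : X} {f : Function.End X} {z : X} (h : z ∉ orbit G v) :
    fixOrbit G v f z = f z := by
  simp only [fixOrbit]
  rw [if_neg h]

lemma gEnd_mem_closure (S : Set (Function.End X))
    (hauts : ∀ σ : Equiv.Perm X, σ ∈ gAut G X → toEnd ⇑σ ∈ Submonoid.closure S)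
    (hcol : ∀ a b : X, stabilizer G a ≤ stabilizer G b →
      toEnd (collapse (G := G) a b) ∈ Submonoid.closure S) :
    ∀ (n : ℕ) (f : Function.End X), f ∈ gEnd G X →
      {z : X | f z ∉ orbit G z}.ncard ≤ n → f ∈ Submonoid.closure S := by
  intro n
  induction n using Nat.strong_induction_on with
  | _ n IH =>
  intro f hf hμ
  by_cases hM : {z : X | f z ∉ orbit G z} = ∅
  · -- f is an automorphism
    have hfz : ∀ z : X, f z ∈ orbit G z := fun z =>
      not_not.mp (Set.eq_empty_iff_forall_notMem.mp hM z)
    have hstab : ∀ z, stabilizer G z = stabilizer G (f z) :=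
      fun z => stab_eq_of_le_mem (stab_le_gEnd hf z) (hfz z)
    have hinj : Function.Injective f := by
      intro z₁ z₂ he
      have h1 := hfz z₁
      have h2 := hfz z₂
      rw [he] at h1
      have hz2 : z₂ ∈ orbit G z₁ := by
        rw [← orbit_eq_of_mem' h1, orbit_eq_of_mem' h2]
        exact mem_orbit_self z₂
      obtain ⟨g, hg⟩ := hz2
      have hg' : g • z₁ = z₂ := hg
      subst hg'
      have hgf : g • f z₁ = f z₁ := by rw [← hf g z₁, ← he]
      have hgz : g ∈ stabilizer G z₁ := by
        rw [hstab z₁]; exact mem_stabilizer_iff.mpr hgf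
      rw [mem_stabilizer_iff] at hgz
      rw [hgz]
    have hbij := Finite.injective_iff_bijective.mp hinj
    exact hauts (Equiv.ofBijective f hbij) hf
  · -- main induction step
    have hMne : {z : X | f z ∉ orbit G z}.Nonempty := Set.nonempty_iff_ne_empty.mpr hM
    obtain ⟨v, hvM, hvmin⟩ := Set.exists_min_image _ (fun z => Nat.card (stabilizer G z))
      (Set.toFinite _) hMne
    have hv : f v ∉ orbit G v := hvM
    have hOvM : orbit G v ⊆ {z : X | f z ∉ orbit G z} := by
      rintro z ⟨g, hg⟩
      have hg' : g • v = z := hg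
      subst hg'
      show f (g • v) ∉ orbit G (g • v)
      rw [hf g v, orbit_smul]
      intro hc
      exact hv (by rwa [smul_mem_orbit_iff'] at hc)
    have hcardOv : 1 ≤ (orbit G v).ncard :=
      (Set.ncard_pos (Set.toFinite _)).mpr ⟨v, mem_orbit_self v⟩
    have hMfin := Set.toFinite {z : X | f z ∉ orbit G z}
    by_cases hB : ∃ u, u ∉ orbit G v ∧ f u ∈ orbit G v
    · -- case B : another orbit maps into the orbit of v
      obtain ⟨u, huv, hfu⟩ := hB
      have hu : f u ∉ orbit G u := by
        intro hc
        apply huv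
        rw [← orbit_eq_of_mem' hfu, orbit_eq_of_mem' hc]
        exact mem_orbit_self u
      have huM : u ∈ {z : X | f z ∉ orbit G z} := hu
      have hle1 : Nat.card (stabilizer G v) ≤ Nat.card (stabilizer G u) := hvmin u huM
      have hle2 : Nat.card (stabilizer G (f u)) = Nat.card (stabilizer G v) :=
        card_stab_of_mem_orbit hfu
      have hsu : stabilizer G u = stabilizer G (f u) :=
        Subgroup.eq_of_le_of_card_ge (stab_le_gEnd hf u) (by rw [hle2]; exact hle1)
      have hneuw : orbit G u ≠ orbit G (f u) := by
        rw [orbit_ne_iff_not_mem]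
        intro hc
        apply huv
        rwa [← orbit_eq_of_mem' hfu]
      have hσmem : swapPerm hsu hneuw ∈ gAut G X :=
        fun g z => swapFun_equivariant hsu hneuw g z
      set σ := swapPerm hsu hneuw with hσdef
      have hinv : ∀ z, σ (σ z) = z := fun z => swapFun_involutive hsu hneuw z
      have hfeq : f = toEnd (f ∘ ⇑σ) * toEnd ⇑σ := by
        funext z
        show f z = f (σ (σ z))
        rw [hinv z]
      have hhg : toEnd (f ∘ ⇑σ) ∈ gEnd G X := by
        intro g z
        show f (σ (g • z)) = g • f (σ z)
        rw [gAut_equivariant hσmem, hf]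
      have hsub : {z : X | (f ∘ ⇑σ) z ∉ orbit G z} ⊆
          {z : X | f z ∉ orbit G z} \ orbit G v := by
        intro z hz
        have hz' : f (σ z) ∉ orbit G z := hz
        by_cases h1 : z ∈ orbit G v
        · exfalso
          have hzw : z ∈ orbit G (f u) := by rwa [orbit_eq_of_mem' hfu]
          obtain ⟨g, hg⟩ := hzw
          have hg' : g • f u = z := hg
          subst hg'
          apply hz'
          have hswap : σ (f u) = u := by
            have h5 := swapFun_smul_right (G := G) hsu.ge hneuw 1
            rwa [one_smul, one_smul] at h5
          rw [gAut_equivariant hσmem, hswap, hf, orbit_smul, smul_mem_orbit_iff']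
          exact mem_orbit_self _
        · refine ⟨?_, h1⟩
          by_cases h2 : z ∈ orbit G u
          · obtain ⟨g, hg⟩ := h2
            have hg' : g • u = z := hg
            subst hg'
            show f (g • u) ∉ orbit G (g • u)
            rw [hf, orbit_smul, smul_mem_orbit_iff']
            exact hu
          · have h3 : z ∉ orbit G (f u) := by
              intro hc; apply h1; rwa [orbit_eq_of_mem' hfu] at hc
            have h4 : σ z = z := swapFun_of_not_mem h2 h3
            show f z ∉ orbit G z
            rwa [h4] at hz'
      have hlt : {z : X | (f ∘ ⇑σ) z ∉ orbit G z}.ncard < n := by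
        have a1 := Set.ncard_le_ncard hsub (Set.toFinite _)
        have a2 := Set.ncard_diff hOvM (Set.toFinite _)
        have a3 := Set.ncard_le_ncard hOvM hMfin
        omega
      rw [hfeq]
      exact mul_mem (IH _ hlt _ hhg le_rfl) (hauts σ hσmem)
    · -- case A : nothing maps into the orbit of v from outside
      push_neg at hB
      have hsvf : stabilizer G v ≤ stabilizer G (f v) := stab_le_gEnd hf v
      have hhg : fixOrbit G v f ∈ gEnd G X := by
        intro g z
        by_cases h1 : z ∈ orbit G v
        · have h2 : g • z ∈ orbit G v := by rwa [smul_mem_orbit_iff']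
          rw [fixOrbit_pos h1, fixOrbit_pos h2]
        · have h2 : g • z ∉ orbit G v := by rwa [smul_mem_orbit_iff']
          rw [fixOrbit_neg h1, fixOrbit_neg h2, hf]
      have hfeq : f = toEnd (collapse (G := G) v (f v)) * fixOrbit G v f := by
        funext z
        show f z = collapse (G := G) v (f v) (fixOrbit G v f z)
        by_cases h1 : z ∈ orbit G v
        · obtain ⟨g, hg⟩ := h1
          have hg' : g • v = z := hg
          subst hg'
          rw [fixOrbit_pos ⟨g, rfl⟩, collapse_smul' hsvf, hf]
        · rw [fixOrbit_neg h1, collapse_of_not_mem' (hB z h1)]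
      have hMh : {z : X | fixOrbit G v f z ∉ orbit G z} =
          {z : X | f z ∉ orbit G z} \ orbit G v := by
        ext z
        by_cases h1 : z ∈ orbit G v
        · simp only [Set.mem_setOf_eq, Set.mem_diff, fixOrbit_pos h1]
          constructor
          · intro hc; exact absurd (mem_orbit_self z) hc
          · rintro ⟨-, hc⟩; exact absurd h1 hc
        · simp only [Set.mem_setOf_eq, Set.mem_diff, fixOrbit_neg h1]
          exact ⟨fun hc => ⟨hc, h1⟩, fun hc => hc.1⟩
      have hlt : {z : X | fixOrbit G v f z ∉ orbit G z}.ncard < n := by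
        rw [hMh]
        have a2 := Set.ncard_diff hOvM (Set.toFinite _)
        have a3 := Set.ncard_le_ncard hOvM hMfin
        omega
      rw [hfeq]
      exact mul_mem (hcol v (f v) hsvf) (IH _ hlt _ hhg le_rfl)

end H6

/-- The specific set `V` of collapsing maps
`[x_i ↦ y_{i,j}]` and `[x_i ↦ x_i']` generates `End_G(X)` modulo `Aut_G(X)`. -/
theorem stmt11 {G X : Type*} [Group G] [MulAction G X] [Finite G] [Finite X]
    (r : ℕ) (H : Fin r → Subgroup G)
    (hH1 : ∀ i, ∃ x : X, MulAction.stabilizer G x = H i)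
    (hH2 : ∀ x : X, ∃! i, ∃ g : G, MulAction.stabilizer G x = conjSub g (H i))
    (J : Fin r → Type) (y : (i : Fin r) → J i → X)
    (hy1 : ∀ i j, H i < MulAction.stabilizer G (y i j))
    (hy2 : ∀ i j j',
      nConjClass (Subgroup.normalizer (H i : Set G)) (MulAction.stabilizer G (y i j)) =
        nConjClass (Subgroup.normalizer (H i : Set G)) (MulAction.stabilizer G (y i j')) → j = j')
    (hy3 : ∀ (i : Fin r) (z : X), H i < MulAction.stabilizer G z →
      ∃ j, nConjClass (Subgroup.normalizer (H i : Set G)) (MulAction.stabilizer G z) =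
        nConjClass (Subgroup.normalizer (H i : Set G)) (MulAction.stabilizer G (y i j)))
    (x : Fin r → X) (hx : ∀ i, MulAction.stabilizer G (x i) = H i)
    (x' : Fin r → X)
    (hx' : ∀ i, 2 ≤ (classOrbits G X (H i)).ncard →
      MulAction.stabilizer G (x' i) = H i ∧
      MulAction.orbit G (x' i) ≠ MulAction.orbit G (x i)) :
    Submonoid.closure
      (({f : Function.End X | ∃ i j, f = collapse (G := G) (x i) (y i j)} ∪
        {f : Function.End X | ∃ i, 2 ≤ (classOrbits G X (H i)).ncard ∧
          f = collapse (G := G) (x i) (x' i)}) ∪ autSet G X) = gEnd G X := by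
  apply le_antisymm
  · rw [Submonoid.closure_le]
    rintro f (hf | hf)
    · rcases hf with ⟨i, j, rfl⟩ | ⟨i, hcard, rfl⟩
      · exact fun g z =>
          collapse_mem_gEnd' (by rw [hx i]; exact (hy1 i j).le) g z
      · exact fun g z =>
          collapse_mem_gEnd' (by rw [hx i, (hx' i hcard).1]) g z
    · obtain ⟨σ, hσ, rfl⟩ := hf
      exact fun g z => hσ g z
  · intro f hf
    refine gEnd_mem_closure _ ?_ ?_ _ f hf le_rfl
    · exact fun σ hσ => Submonoid.subset_closure (Or.inr ⟨σ, hσ, rfl⟩)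
    · exact fun a b hab =>
        collapse_mem_closure hH2 hy1 hy3 hx (fun i hc => hx' i hc) hab
end

section
/- Let G be a group acting transitively on a set X, and suppose the stabilizer G_x of every (equivalently, some) point x ∈ X is finite, or of finite index in G, or normal in G. Then every G-equivariant transformation of X is bijective: End_G(X) = Aut_G(X). -/
/-- For a transitive action whose point stabilizer is finite, of finite
index, or normal, every `G`-equivariant transformation of `X` is bijective. -/
theorem stmt19 {G X : Type*} [Group G] [MulAction G X] [MulAction.IsPretransitive G X]
    (x : X)
    (h : Finite (MulAction.stabilizer G x) ∨ (MulAction.stabilizer G x).FiniteIndex ∨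
      (MulAction.stabilizer G x).Normal) :
    ∀ τ ∈ gEnd G X, Function.Bijective τ := by
  intro τ hτ
  set H := MulAction.stabilizer G x with hH
  -- τ x lies in the orbit of x
  obtain ⟨g₀, hg₀⟩ := MulAction.exists_smul_eq G x (τ x)
  -- the stabilizer of τ x is the conjugate of H by g₀
  have hstab : MulAction.stabilizer G (τ x) = H.map (MulAut.conj g₀).toMonoidHom := by
    rw [← hg₀, MulAction.stabilizer_smul_eq_stabilizer_map_conj]
  -- H is contained in the stabilizer of τ x
  have hle : H ≤ MulAction.stabilizer G (τ x) := by
    intro k hk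
    have : τ (k • x) = τ x := by rw [(MulAction.mem_stabilizer_iff).1 hk]
    have : k • τ x = τ x := by rw [← hτ k x, this]
    exact this
  -- in each of the three cases, the containment is an equality
  have heq : MulAction.stabilizer G (τ x) = H := by
    rcases h with hfin | hidx | hnorm
    · -- finite case: cardinalities agree
      have hK : Finite (MulAction.stabilizer G (τ x)) := by
        rw [hstab]
        exact Finite.of_equiv H
          (Subgroup.equivMapOfInjective H _ (MulAut.conj g₀).injective).toEquiv
      have hcard : Nat.card (MulAction.stabilizer G (τ x)) = Nat.card H := by
        rw [hstab]
        exact Nat.card_congr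
          (Subgroup.equivMapOfInjective H _ (MulAut.conj g₀).injective).toEquiv.symm
      exact (Subgroup.eq_of_le_of_card_ge hle hcard.le).symm
    · -- finite index case: indices agree
      have hidx' : (MulAction.stabilizer G (τ x)).index = H.index := by
        rw [hstab]
        exact Subgroup.index_map_eq H (MulAut.conj g₀).surjective
          (by rw [(MulAut.conj g₀).toMonoidHom.ker_eq_bot_iff.mpr
            (MulAut.conj g₀).injective]; exact bot_le)
      by_contra hne
      have hlt : H < MulAction.stabilizer G (τ x) := lt_of_le_of_ne hle (Ne.symm hne)
      have := Subgroup.index_strictAnti hlt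
      omega
    · -- normal case: conjugate equals itself
      rw [hstab]
      ext a
      simp only [Subgroup.mem_map, MulEquiv.coe_toMonoidHom, MulAut.conj_apply]
      constructor
      · rintro ⟨b, hb, rfl⟩; exact hnorm.conj_mem b hb g₀
      · intro ha
        exact ⟨g₀⁻¹ * a * g₀, by simpa using hnorm.conj_mem a ha g₀⁻¹, by group⟩
  constructor
  · -- injectivity
    intro a b hab
    obtain ⟨g, rfl⟩ := MulAction.exists_smul_eq G x a
    obtain ⟨k, rfl⟩ := MulAction.exists_smul_eq G x b
    have : g • τ x = k • τ x := by rw [← hτ g x, ← hτ k x, hab]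
    have hm : k⁻¹ * g ∈ MulAction.stabilizer G (τ x) := by
      rw [MulAction.mem_stabilizer_iff, mul_smul, this, inv_smul_smul]
    rw [heq] at hm
    have : (k⁻¹ * g) • x = x := hm
    rw [mul_smul] at this
    calc g • x = k • (k⁻¹ • g • x) := by rw [smul_inv_smul]
    _ = k • x := by rw [this]
  · -- surjectivity
    intro y
    obtain ⟨g, hg⟩ := MulAction.exists_smul_eq G (τ x) y
    exact ⟨g • x, by rw [hτ g x, hg]⟩
end
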